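/- arXiv:1606.01317 — 3 statements merged into one kernel-verified Lean document; each statement's English description precedes it below -/
import Mathlib

section
/- Suppose 1/2 < μ < 1 and x₀ ∈ [0,1] is such that T_μⁿ(x₀) = 1/2 for some integer n ≥ 0 (where T_μⁿ denotes the n-th iterate of T_μ). Then the commuter h_μ is discontinuous at x₀. -/
open Set

/-- The symmetric tent map of height `μ`:
`T_μ(x) = 2μx` for `x ≤ 1/2` and `T_μ(x) = 2μ(1-x)` for `x > 1/2`. -/
noncomputable def tentMap (μ : ℝ) (x : ℝ) : ℝ :=
  if x ≤ 1/2 then 2*μ*x else 2*μ*(1-x)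

/-- `h : [0,1] → [0,1]` satisfies the commuter functional equation for `T_μ`:
`h(x) = (1/2)·h(2μx)` for `0 ≤ x ≤ 1/2` and `h(x) = 1 - (1/2)·h(2μ(1-x))` for `1/2 < x ≤ 1`. -/
def IsCommuter (μ : ℝ) (h : ℝ → ℝ) : Prop :=
  (∀ x ∈ Icc (0:ℝ) 1, h x ∈ Icc (0:ℝ) 1) ∧
  (∀ x : ℝ, 0 ≤ x → x ≤ 1/2 → h x = (1/2) * h (2*μ*x)) ∧
  (∀ x : ℝ, 1/2 < x → x ≤ 1 → h x = 1 - (1/2) * h (2*μ*(1-x)))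

section Aux

open Filter

variable {μ : ℝ} (hμ1 : 1/2 < μ) (hμ2 : μ < 1) {h : ℝ → ℝ} (hc : IsCommuter μ h)

include hμ1 hμ2 hc

lemma Commuter.half_le_right : ∀ y : ℝ, 1/2 < y → y ≤ 1 → 1/2 ≤ h y := by
  intro y hy1 hy2
  have hy' : 2*μ*(1-y) ∈ Icc (0:ℝ) 1 := by
    constructor <;> nlinarith
  have := (hc.1 _ hy').2
  rw [hc.2.2 y hy1 hy2]
  linarith

lemma Commuter.aux_zero :
    ∀ k : ℕ, ∀ y : ℝ, 0 < y → y ≤ 1/2 → h y = 0 → (2*μ)^k * y ≤ 1/2 := by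
  intro k
  induction k with
  | zero => intro y hy1 hy2 _; simpa using hy2
  | succ k ih =>
    intro y hy1 hy2 hy0
    have hy' : h (2*μ*y) = 0 := by
      have := hc.2.1 y hy1.le hy2
      rw [hy0] at this; linarith
    have hpos : 0 < 2*μ*y := by nlinarith
    have hle1 : 2*μ*y ≤ 1 := by nlinarith
    have hle : 2*μ*y ≤ 1/2 := by
      by_contra hgt
      push_neg at hgt
      have := Commuter.half_le_right hμ1 hμ2 hc _ hgt hle1
      rw [hy'] at this; linarith
    have := ih _ hpos hle hy'
    calc (2*μ)^(k+1) * y = (2*μ)^k * (2*μ*y) := by ring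
    _ ≤ 1/2 := this

lemma Commuter.h_pos : ∀ y : ℝ, 0 < y → y ≤ 1 → 0 < h y := by
  intro y hy1 hy2
  rcases lt_or_ge (1/2) y with hgt | hle
  · have := Commuter.half_le_right hμ1 hμ2 hc y hgt hy2; linarith
  · by_contra hnp
    push_neg at hnp
    have hy0 : h y = 0 := le_antisymm hnp (hc.1 y ⟨hy1.le, hy2⟩).1
    obtain ⟨k, hk⟩ := pow_unbounded_of_one_lt (1/(2*y)) (by linarith : (1:ℝ) < 2*μ)
    have := Commuter.aux_zero hμ1 hμ2 hc k y hy1 hle hy0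
    have h2 : 1/(2*y) < (2*μ)^k := hk
    have : 1/2 < (2*μ)^k * y := by
      rw [div_lt_iff₀ (by linarith : (0:ℝ) < 2*y)] at h2
      nlinarith
    linarith

lemma Commuter.discont_half : ¬ ContinuousWithinAt h (Icc (0:ℝ) 1) (1/2) := by
  intro hcont
  have key : ∀ x : ℝ, 0 ≤ x → x < 1/2 → h (1-x) = 1 - h x := by
    intro x hx1 hx2
    have h1 : h x = (1/2) * h (2*μ*x) := hc.2.1 x hx1 hx2.le
    have h2 : h (1-x) = 1 - (1/2) * h (2*μ*(1-(1-x))) :=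
      hc.2.2 (1-x) (by linarith) (by linarith)
    simp only [sub_sub_cancel] at h2
    rw [h2, h1]
  have hbd : ∀ k : ℕ, 0 < 1/((k:ℝ)+3) ∧ 1/((k:ℝ)+3) ≤ 1/3 := by
    intro k
    have : (0:ℝ) < (k:ℝ)+3 := by positivity
    constructor
    · positivity
    · rw [div_le_div_iff₀ this (by norm_num)]
      have : (0:ℝ) ≤ (k:ℝ) := Nat.cast_nonneg k
      linarith
  have htend0 : Tendsto (fun k : ℕ => 1/((k:ℝ)+3)) atTop (nhds 0) := by
    apply Tendsto.comp tendsto_inv_atTop_zero (by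
      exact tendsto_atTop_add_const_right _ 3 tendsto_natCast_atTop_atTop) |>.congr
    intro k; simp [one_div]
  have ha : Tendsto (fun k : ℕ => 1/2 - 1/((k:ℝ)+3)) atTop
      (nhdsWithin (1/2) (Icc (0:ℝ) 1)) := by
    apply tendsto_nhdsWithin_of_tendsto_nhds_of_eventually_within
    · have := tendsto_const_nhds (x := (1/2:ℝ)) (f := atTop (α := ℕ)) |>.sub htend0
      simpa using this
    · filter_upwards with k
      obtain ⟨h1, h2⟩ := hbd k
      simp only [mem_Icc]
      constructor <;> linarith
  have hb : Tendsto (fun k : ℕ => 1/2 + 1/((k:ℝ)+3)) atTop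
      (nhdsWithin (1/2) (Icc (0:ℝ) 1)) := by
    apply tendsto_nhdsWithin_of_tendsto_nhds_of_eventually_within
    · have := tendsto_const_nhds (x := (1/2:ℝ)) (f := atTop (α := ℕ)) |>.add htend0
      simpa using this
    · filter_upwards with k
      obtain ⟨h1, h2⟩ := hbd k
      simp only [mem_Icc]
      constructor <;> linarith
  have taa : Tendsto (fun k : ℕ => h (1/2 - 1/((k:ℝ)+3))) atTop (nhds (h (1/2))) :=
    hcont.tendsto.comp ha
  have tbb : Tendsto (fun k : ℕ => h (1/2 + 1/((k:ℝ)+3))) atTop (nhds (h (1/2))) :=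
    hcont.tendsto.comp hb
  have tbb' : Tendsto (fun k : ℕ => h (1/2 + 1/((k:ℝ)+3))) atTop (nhds (1 - h (1/2))) := by
    have : (fun k : ℕ => h (1/2 + 1/((k:ℝ)+3))) = fun k : ℕ => 1 - h (1/2 - 1/((k:ℝ)+3)) := by
      funext k
      obtain ⟨h1, h2⟩ := hbd k
      have := key (1/2 - 1/((k:ℝ)+3)) (by linarith) (by linarith)
      rw [show (1:ℝ) - (1/2 - 1/((k:ℝ)+3)) = 1/2 + 1/((k:ℝ)+3) by ring] at this
      rw [this]
    rw [this]
    exact tendsto_const_nhds.sub taa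
  have hhalf : h (1/2) = 1/2 := by
    have := tendsto_nhds_unique tbb tbb'
    linarith
  have h1 : h (1/2) = (1/2) * h μ := by
    have := hc.2.1 (1/2) (by norm_num) le_rfl
    rwa [show 2*μ*(1/2) = μ by ring] at this
  have h2 : h μ = 1 - (1/2) * h (2*μ*(1-μ)) := hc.2.2 μ hμ1 hμ2.le
  have h3 : 0 < h (2*μ*(1-μ)) := Commuter.h_pos hμ1 hμ2 hc _ (by nlinarith) (by nlinarith)
  rw [h1, h2] at hhalf
  linarith

lemma Commuter.step (x₀ : ℝ) (hx₀ : x₀ ∈ Icc (0:ℝ) 1) (hne : x₀ ≠ 1/2)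
    (hcont : ContinuousWithinAt h (Icc (0:ℝ) 1) x₀) :
    ContinuousWithinAt h (Icc (0:ℝ) 1) (tentMap μ x₀) := by
  have h2μ : (1:ℝ) < 2*μ := by linarith
  obtain ⟨hx0, hx1⟩ := hx₀
  rcases lt_or_gt_of_ne hne with hlt | hgt
  · -- x₀ < 1/2, tentMap μ x₀ = 2μx₀
    have hT : tentMap μ x₀ = 2*μ*x₀ := if_pos hlt.le
    rw [hT]
    set y₀ := 2*μ*x₀ with hy₀
    have hy₀μ : y₀ < μ := by nlinarith
    have hg : ContinuousWithinAt (fun y : ℝ => 2 * h (y/(2*μ))) (Icc (0:ℝ) 1) y₀ := by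
      have hgc : ContinuousWithinAt (fun y : ℝ => y/(2*μ)) (Icc (0:ℝ) 1) y₀ :=
        (continuous_id.div_const _).continuousWithinAt
      have hmaps : MapsTo (fun y : ℝ => y/(2*μ)) (Icc (0:ℝ) 1) (Icc (0:ℝ) 1) := by
        intro y hy
        constructor
        · exact div_nonneg hy.1 (by linarith)
        · rw [div_le_one (by linarith)]; linarith [hy.2]
      have heq : y₀ / (2*μ) = x₀ := by
        field_simp [hy₀]; try ring
      have := ContinuousWithinAt.comp (heq ▸ hcont) hgc hmaps
      exact continuousWithinAt_const.mul this
    apply hg.congr_of_eventuallyEq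
    · have hev : Iio μ ∈ nhds y₀ := Iio_mem_nhds hy₀μ
      filter_upwards [mem_nhdsWithin_of_mem_nhds hev, self_mem_nhdsWithin] with y hy hyI
      have hyd : 0 ≤ y/(2*μ) := div_nonneg hyI.1 (by linarith)
      have hyd2 : y/(2*μ) ≤ 1/2 := by
        rw [div_le_div_iff₀ (by linarith) (by norm_num)]
        simp only [mem_Iio] at hy; linarith
      have := hc.2.1 (y/(2*μ)) hyd hyd2
      rw [show 2*μ*(y/(2*μ)) = y by field_simp] at this
      rw [this]; ring
    · have := hc.2.1 x₀ hx0 hlt.le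
      rw [show y₀/(2*μ) = x₀ by field_simp [hy₀]; try ring, this]
      try ring
  · -- x₀ > 1/2, tentMap μ x₀ = 2μ(1-x₀)
    have hT : tentMap μ x₀ = 2*μ*(1-x₀) := if_neg (not_le.mpr hgt)
    rw [hT]
    set y₀ := 2*μ*(1-x₀) with hy₀
    have hy₀μ : y₀ < μ := by nlinarith
    have hg : ContinuousWithinAt (fun y : ℝ => 2 - 2 * h (1 - y/(2*μ))) (Icc (0:ℝ) 1) y₀ := by
      have hgc : ContinuousWithinAt (fun y : ℝ => 1 - y/(2*μ)) (Icc (0:ℝ) 1) y₀ :=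
        (continuous_const.sub (continuous_id.div_const _)).continuousWithinAt
      have hmaps : MapsTo (fun y : ℝ => 1 - y/(2*μ)) (Icc (0:ℝ) 1) (Icc (0:ℝ) 1) := by
        intro y hy
        have h1 : y/(2*μ) ≤ 1 := by
          rw [div_le_one (by linarith)]; linarith [hy.2]
        have h2 : 0 ≤ y/(2*μ) := div_nonneg hy.1 (by linarith)
        exact ⟨by linarith, by linarith⟩
      have heq : 1 - y₀ / (2*μ) = x₀ := by
        field_simp [hy₀]; try ring
      exact continuousWithinAt_const.sub (continuousWithinAt_const.mul
        (ContinuousWithinAt.comp (heq ▸ hcont) hgc hmaps))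
    apply hg.congr_of_eventuallyEq
    · have hev : Iio μ ∈ nhds y₀ := Iio_mem_nhds hy₀μ
      filter_upwards [mem_nhdsWithin_of_mem_nhds hev, self_mem_nhdsWithin] with y hy hyI
      simp only [mem_Iio] at hy
      have hyd : 1/2 < 1 - y/(2*μ) := by
        rw [show (1:ℝ)/2 = 1 - 1/2 by ring]
        apply sub_lt_sub_left
        rw [div_lt_div_iff₀ (by linarith) (by norm_num)]; linarith
      have hyd2 : 1 - y/(2*μ) ≤ 1 := by
        have : 0 ≤ y/(2*μ) := div_nonneg hyI.1 (by linarith)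
        linarith
      have := hc.2.2 (1 - y/(2*μ)) hyd hyd2
      rw [show 2*μ*(1-(1 - y/(2*μ))) = y by field_simp; ring] at this
      rw [this]; ring
    · have := hc.2.2 x₀ hgt hx1
      rw [show (1:ℝ) - y₀/(2*μ) = x₀ by field_simp [hy₀]; try ring, this]
      try rw [hy₀]
      try ring

lemma Commuter.tentMap_mem (x : ℝ) (hx : x ∈ Icc (0:ℝ) 1) :
    tentMap μ x ∈ Icc (0:ℝ) 1 := by
  obtain ⟨h0, h1⟩ := hx
  unfold tentMap
  split <;> constructor <;> first | nlinarith | nlinarith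

end Aux

/-- For `1/2 < μ < 1`, if `T_μ^[n](x₀) = 1/2` for some `n ≥ 0`, then the commuter `h_μ`
is discontinuous at `x₀`. -/
theorem commuter_discontinuous_at_preimage (μ : ℝ) (hμ1 : 1/2 < μ) (hμ2 : μ < 1)
    (h : ℝ → ℝ) (hc : IsCommuter μ h)
    (x₀ : ℝ) (hx₀ : x₀ ∈ Icc (0:ℝ) 1)
    (n : ℕ) (hn : (tentMap μ)^[n] x₀ = 1/2) :
    ¬ ContinuousWithinAt h (Icc (0:ℝ) 1) x₀ := by
  induction n generalizing x₀ with
  | zero =>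
    simp only [Function.iterate_zero, id_eq] at hn
    subst hn
    exact Commuter.discont_half hμ1 hμ2 hc
  | succ n ih =>
    by_cases hne : x₀ = 1/2
    · subst hne
      exact Commuter.discont_half hμ1 hμ2 hc
    · intro hcont
      have hstep := Commuter.step hμ1 hμ2 hc x₀ hx₀ hne hcont
      have hmem := Commuter.tentMap_mem hμ1 hμ2 hc x₀ hx₀
      rw [Function.iterate_succ_apply] at hn
      exact ih (tentMap μ x₀) hmem hn hstep
end

section
/- Fix an integer n ≥ 3. Then for every x in the open interval ( 2^{n−2}/(2^{n−1}+1) , 2^{n−2}/(2^{n−1}−1) ) with x ≠ 1/2, the points x, T(x), …, T^{n−1}(x) are pairwise distinct and Pat(x, T, n) = σ_n, the permutation (n−1) n 1 2 3 ⋯ (n−2). Equivalently, T²(x) < T³(x) < ⋯ < T^{n−1}(x) < x < T(x). -/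
open Set

/-- The permutation σ_n = (n-1) n 1 2 ⋯ (n-2) (one-line notation, 1-indexed), i.e. in
0-indexed terms the map `i ↦ i + (n-2) (mod n)` on `Fin n`. -/
def sigmaPerm (n : ℕ) : Equiv.Perm (Fin n) := finRotate n ^ (n - 2)

lemma tent_left {y : ℝ} (h : y ≤ 1/2) : tentMap 1 y = 2*y := by
  rw [tentMap, if_pos h]; ring

lemma tent_right {y : ℝ} (h : ¬ y ≤ 1/2) : tentMap 1 y = 2*(1-y) := by
  rw [tentMap, if_neg h]; ring

lemma val_finRotate_pow (m k : ℕ) (i : Fin (m+3)) :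
    ((finRotate (m+3) ^ k) i).val = ((i:ℕ) + k) % (m+3) := by
  induction k with
  | zero => simp [Nat.mod_eq_of_lt i.isLt]
  | succ k ih =>
    rw [pow_succ', Equiv.Perm.mul_apply]
    have h1 : ∀ y : Fin (m+3), ((finRotate (m+3)) y).val = ((y:ℕ) + 1) % (m+3) := by
      intro y
      rw [finRotate_succ_apply, Fin.val_add]
      simp [Fin.val_one]
    rw [h1, ih, Nat.mod_add_mod, Nat.add_assoc]

lemma chain_lemma (m : ℕ) (x c : ℝ) (hc0 : 0 < c)
    (hT2 : (tentMap 1)^[2] x = c)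
    (hcb : c * (4*2^m - 1) < 2)
    (hlast : 2^m * c < x)
    (hTx : x < tentMap 1 x) :
    (∀ i j : Fin (m+3), i ≠ j → (tentMap 1)^[(i:ℕ)] x ≠ (tentMap 1)^[(j:ℕ)] x) ∧
    (∀ i j : Fin (m+3), sigmaPerm (m+3) i < sigmaPerm (m+3) j ↔
      (tentMap 1)^[(i:ℕ)] x < (tentMap 1)^[(j:ℕ)] x) := by
  have hPpos : (0:ℝ) < 2^m := by positivity
  have hP1 : (1:ℝ) ≤ 2^m := one_le_pow₀ (by norm_num)
  have hc23 : c < 2/3 := by nlinarith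
  have hm23 : (2:ℝ)^m * c < 2/3 := by nlinarith
  -- small values stay in the left branch
  have hcsmall : ∀ k, k + 1 ≤ m → (2:ℝ)^k * c ≤ 1/2 := by
    intro k hk
    have h1 : (2:ℝ)^(k+1) ≤ 2^m := pow_le_pow_right₀ (by norm_num) hk
    rw [pow_succ] at h1
    have h2 : (2:ℝ)^k * 2 * c ≤ 2^m * c := mul_le_mul_of_nonneg_right h1 hc0.le
    linarith
  -- the explicit formula for iterates 2, …, m+2
  have hform : ∀ k, k ≤ m → (tentMap 1)^[k+2] x = 2^k * c := by
    intro k hk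
    induction k with
    | zero => simpa using hT2
    | succ k ih =>
      have hk' : k ≤ m := by omega
      have hsm : (2:ℝ)^k * c ≤ 1/2 := hcsmall k (by omega)
      have e : k+1+2 = (k+2)+1 := by omega
      rw [e, Function.iterate_succ_apply', ih hk', tent_left hsm]
      ring
  have hpos : ∀ k, 0 < (2:ℝ)^k * c := fun k => by positivity
  -- adjacent steps of the reordered orbit
  have hadj : ∀ k, k + 1 ≤ m + 2 →
      (tentMap 1)^[(k+2) % (m+3)] x < (tentMap 1)^[(k+1+2) % (m+3)] x := by
    intro k hk
    by_cases h1 : k + 1 ≤ m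
    · have e1 : (k+2) % (m+3) = k+2 := Nat.mod_eq_of_lt (by omega)
      have e2 : (k+1+2) % (m+3) = k+1+2 := Nat.mod_eq_of_lt (by omega)
      rw [e1, e2, hform k (by omega), hform (k+1) h1, pow_succ]
      nlinarith [hpos k]
    · by_cases h2 : k = m
      · have e1 : (k+2) % (m+3) = m+2 := by
          rw [h2]; exact Nat.mod_eq_of_lt (by omega)
        have e2 : (k+1+2) % (m+3) = 0 := by
          rw [h2, show m+1+2 = m+3 by omega, Nat.mod_self]
        rw [e1, e2, hform m le_rfl, Function.iterate_zero_apply]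
        exact hlast
      · have h3 : k = m + 1 := by omega
        have e1 : (k+2) % (m+3) = 0 := by
          rw [h3, show m+1+2 = m+3 by omega, Nat.mod_self]
        have e2 : (k+1+2) % (m+3) = 1 := by
          rw [h3, show m+1+1+2 = (m+3)+1 by omega, Nat.add_mod_left]
          exact Nat.mod_eq_of_lt (by omega)
        rw [e1, e2, Function.iterate_zero_apply, Function.iterate_one]
        exact hTx
  -- monotonicity along the reordered orbit
  have hmono : ∀ d a, a + d + 1 ≤ m + 2 →
      (tentMap 1)^[(a+2) % (m+3)] x < (tentMap 1)^[(a+d+1+2) % (m+3)] x := by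
    intro d
    induction d with
    | zero => intro a h; simpa using hadj a (by omega)
    | succ d ih =>
      intro a h
      have h1 := ih a (by omega)
      have h2 := hadj (a+d+1) (by omega)
      calc (tentMap 1)^[(a+2) % (m+3)] x
          < (tentMap 1)^[(a+d+1+2) % (m+3)] x := h1
        _ < (tentMap 1)^[(a+d+1+1+2) % (m+3)] x := h2
        _ = (tentMap 1)^[(a+(d+1)+1+2) % (m+3)] x := by ring_nf
  have hmono' : ∀ a b : ℕ, a < b → b ≤ m + 2 →
      (tentMap 1)^[(a+2) % (m+3)] x < (tentMap 1)^[(b+2) % (m+3)] x := by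
    intro a b hab hb
    have hb' : b = a + (b - a - 1) + 1 := by omega
    rw [hb']
    exact hmono (b - a - 1) a (by omega)
  -- values of sigmaPerm
  have hval : ∀ i : Fin (m+3), (sigmaPerm (m+3) i).val = ((i:ℕ) + (m+1)) % (m+3) := by
    intro i
    rw [sigmaPerm, show m+3-2 = m+1 by omega]
    exact val_finRotate_pow m (m+1) i
  -- key reindexing identity
  have hkey : ∀ i : Fin (m+3),
      (tentMap 1)^[(i:ℕ)] x = (tentMap 1)^[((sigmaPerm (m+3) i).val + 2) % (m+3)] x := by
    intro i
    rw [hval i, Nat.mod_add_mod, show (i:ℕ)+(m+1)+2 = (i:ℕ)+(m+3) by omega,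
      Nat.add_mod_right, Nat.mod_eq_of_lt i.isLt]
  have hvb : ∀ i : Fin (m+3), (sigmaPerm (m+3) i).val ≤ m + 2 := by
    intro i
    have := (sigmaPerm (m+3) i).isLt
    omega
  have part2 : ∀ i j : Fin (m+3), sigmaPerm (m+3) i < sigmaPerm (m+3) j ↔
      (tentMap 1)^[(i:ℕ)] x < (tentMap 1)^[(j:ℕ)] x := by
    intro i j
    rw [hkey i, hkey j, Fin.lt_def]
    constructor
    · intro h
      exact hmono' _ _ h (hvb j)
    · intro h
      rcases lt_trichotomy ((sigmaPerm (m+3) i).val) ((sigmaPerm (m+3) j).val) with h1|h1|h1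
      · exact h1
      · rw [h1] at h; exact absurd h (lt_irrefl _)
      · exact absurd (hmono' _ _ h1 (hvb i)) (lt_asymm h)
  refine ⟨?_, part2⟩
  intro i j hij
  have hs : sigmaPerm (m+3) i ≠ sigmaPerm (m+3) j :=
    fun h => hij ((sigmaPerm (m+3)).injective h)
  rcases hs.lt_or_gt with h|h
  · exact ne_of_lt ((part2 i j).mp h)
  · exact ne_of_gt ((part2 j i).mp h)

/-- For `n ≥ 3` and every `x ≠ 1/2` in `(2^(n-2)/(2^(n-1)+1), 2^(n-2)/(2^(n-1)-1))`,
the first `n` iterates of the full tent map `T = T_1` at `x` are pairwise distinct and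
`Pat(x, T, n) = σ_n = (n-1) n 1 2 ⋯ (n-2)`. -/
theorem pattern_near_half (n : ℕ) (hn : 3 ≤ n) (x : ℝ)
    (hx : x ∈ Ioo ((2:ℝ)^(n-2)/((2:ℝ)^(n-1)+1)) ((2:ℝ)^(n-2)/((2:ℝ)^(n-1)-1)))
    (hxh : x ≠ 1/2) :
    (∀ i j : Fin n, i ≠ j → (tentMap 1)^[(i:ℕ)] x ≠ (tentMap 1)^[(j:ℕ)] x) ∧
    (∀ i j : Fin n, sigmaPerm n i < sigmaPerm n j ↔
      (tentMap 1)^[(i:ℕ)] x < (tentMap 1)^[(j:ℕ)] x) := by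
  obtain ⟨m, rfl⟩ : ∃ m, n = m + 3 := ⟨n - 3, by omega⟩
  have hPpos : (0:ℝ) < 2^m := by positivity
  have hP1 : (1:ℝ) ≤ 2^m := one_le_pow₀ (by norm_num)
  have epow1 : (2:ℝ)^(m+3-2) = 2*2^m := by
    rw [show m+3-2 = m+1 by omega]; ring
  have epow2 : (2:ℝ)^(m+3-1) = 4*2^m := by
    rw [show m+3-1 = m+2 by omega]; ring
  rw [Set.mem_Ioo, epow1, epow2] at hx
  obtain ⟨hxl, hxr⟩ := hx
  have hden : (0:ℝ) < 4*2^m - 1 := by nlinarith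
  have hx0 : 0 < x := lt_trans (by positivity) hxl
  have hxl' : 2*2^m < x*(4*2^m+1) := by
    rw [div_lt_iff₀ (by positivity)] at hxl; linarith
  have hxr' : x*(4*2^m-1) < 2*2^m := by
    rw [lt_div_iff₀ hden] at hxr; linarith
  have hx23 : x < 2/3 := by nlinarith
  have hiter2 : (tentMap 1)^[2] x = tentMap 1 (tentMap 1 x) := by
    rw [show (2:ℕ) = 1 + 1 from rfl, Function.iterate_add_apply,
      Function.iterate_one]
  by_cases hle : x ≤ 1/2
  · have hxlt : x < 1/2 := lt_of_le_of_ne hle hxh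
    have hq : 1/4 < x := by nlinarith
    have hT2 : (tentMap 1)^[2] x = 2 - 4*x := by
      rw [hiter2, tent_left hle, tent_right (by linarith)]; ring
    exact chain_lemma m x (2-4*x) (by linarith) hT2 (by nlinarith) (by nlinarith)
      (by rw [tent_left hle]; linarith)
  · have hgt : 1/2 < x := lt_of_not_ge hle
    have hT2 : (tentMap 1)^[2] x = 4*x - 2 := by
      rw [hiter2, tent_right hle, tent_right (by linarith)]; ring
    exact chain_lemma m x (4*x-2) (by linarith) hT2 (by nlinarith) (by nlinarith)
      (by rw [tent_right hle]; linarith)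
end

section
/- For every μ with 1/2 < μ < 1, the inclusion Allow(T_μ) ⊆ Allow(T) is strict; that is, there exists a permutation π with π ∈ Allow(T) and π ∉ Allow(T_μ). -/
open Set

/-- `Allows f p` means the permutation `p` of `{0, …, n-1}` is an allowed pattern of the
map `f` on `[0,1]`: there is `x ∈ [0,1]` whose orbit `x, f(x), …, f^[n-1](x)` is in the
same relative order as `p 0, p 1, …, p (n-1)`. -/
def Allows (f : ℝ → ℝ) {n : ℕ} (p : Equiv.Perm (Fin n)) : Prop :=
  ∃ x ∈ Icc (0:ℝ) 1, ∀ i j : Fin n, p i < p j ↔ f^[(i:ℕ)] x < f^[(j:ℕ)] x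

/-- auxiliary permutation `i ↦ i - 2` on `Fin n` (the ranks of our pattern). -/
def shiftPerm (n : ℕ) (hn : 2 ≤ n) : Equiv.Perm (Fin n) where
  toFun i := if h : (i : ℕ) < 2 then ⟨(i : ℕ) + n - 2, by omega⟩
             else ⟨(i : ℕ) - 2, by have := i.isLt; omega⟩
  invFun j := if h : (j : ℕ) < n - 2 then ⟨(j : ℕ) + 2, by omega⟩
              else ⟨(j : ℕ) + 2 - n, by have := j.isLt; omega⟩
  left_inv i := by
    rcases i with ⟨i, hi⟩
    by_cases h : i < 2 <;> simp only [h, dif_pos, dif_neg, not_false_iff] <;>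
      · split_ifs <;> simp_all [Fin.ext_iff] <;> omega
  right_inv j := by
    rcases j with ⟨j, hj⟩
    by_cases h : j < n - 2 <;> simp only [h, dif_pos, dif_neg, not_false_iff] <;>
      · split_ifs <;> simp_all [Fin.ext_iff] <;> omega

lemma shiftPerm_val (n : ℕ) (hn : 2 ≤ n) (i : Fin n) :
    ((shiftPerm n hn i : Fin n) : ℕ) =
      if (i : ℕ) < 2 then (i : ℕ) + n - 2 else (i : ℕ) - 2 := by
  rcases i with ⟨i, hi⟩
  simp only [shiftPerm, Equiv.coe_fn_mk]
  split_ifs <;> rfl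

lemma tent_le {μ y : ℝ} (h : y ≤ 1/2) : tentMap μ y = 2*μ*y := if_pos h
lemma tent_gt {μ y : ℝ} (h : ¬ y ≤ 1/2) : tentMap μ y = 2*μ*(1-y) := if_neg h

lemma tent_mem {μ y : ℝ} (h0 : 0 < μ) (hy : y ∈ Icc (0:ℝ) 1) :
    tentMap μ y ∈ Icc (0:ℝ) μ := by
  obtain ⟨hy0, hy1⟩ := hy
  unfold tentMap; split_ifs with h <;> constructor <;> nlinarith

lemma tent_iter_mem {μ : ℝ} (h0 : 0 < μ) (h1 : μ ≤ 1) {x : ℝ} (hx : x ∈ Icc (0:ℝ) 1)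
    (m : ℕ) : (tentMap μ)^[m] x ∈ Icc (0:ℝ) 1 := by
  induction m with
  | zero => exact hx
  | succ m ih =>
    rw [Function.iterate_succ_apply']
    have := tent_mem h0 ih
    exact ⟨this.1, this.2.trans h1⟩

/-- orbit of `x0 = 1/2 - ε` under the full tent map, for `ε = 2^{-(n+1)}`. -/
lemma orbit1 (n : ℕ) (hn : 6 ≤ n) :
    ∀ k, k + 2 ≤ n - 1 →
      (tentMap 1)^[k+2] (1/2 - ((2:ℝ)^(n+1))⁻¹) = 2^(k+2) * ((2:ℝ)^(n+1))⁻¹ := by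
  set ε : ℝ := ((2:ℝ)^(n+1))⁻¹ with hε
  have hεpos : 0 < ε := by positivity
  have hεsmall : ε ≤ ((2:ℝ)^7)⁻¹ := by
    apply inv_anti₀ (by positivity)
    exact pow_le_pow_right₀ (by norm_num) (by omega)
  have hbound : ∀ m : ℕ, m ≤ n - 2 → (2:ℝ)^m * ε ≤ 1/8 := by
    intro m hm
    have h2 : (2:ℝ)^m ≤ 2^(n-2) := pow_le_pow_right₀ (by norm_num) hm
    have hkey : (2:ℝ)^(n-2) * ε = ((2:ℝ)^3)⁻¹ := by
      rw [hε]
      have : (2:ℝ)^(n+1) = 2^(n-2) * 2^3 := by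
        rw [← pow_add]; congr 1; omega
      rw [this]
      field_simp
    nlinarith [pow_pos (show (0:ℝ) < 2 by norm_num) (n-2),
      pow_pos (show (0:ℝ) < 2 by norm_num) m]
  have h2 : (tentMap 1)^[2] (1/2 - ε) = 2^2 * ε := by
    have e1 : tentMap 1 (1/2 - ε) = 1 - 2*ε := by
      rw [tent_le (by linarith)]; ring
    have e2 : tentMap 1 (1 - 2*ε) = 4*ε := by
      rw [tent_gt (by norm_num at hεsmall ⊢; linarith)]; ring
    rw [show 2 = 1 + 1 from rfl, Function.iterate_add_apply]
    simp only [Function.iterate_one]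
    rw [e1, e2]; ring
  intro k hk
  induction k with
  | zero => exact h2
  | succ k ih =>
    have hk' : k + 2 ≤ n - 1 := by omega
    rw [show k+1+2 = (k+2)+1 by ring, Function.iterate_succ_apply', ih hk']
    rw [tent_le (by have := hbound (k+2) (by omega); linarith)]
    ring

lemma iff_of_strict {n : ℕ} (p : Equiv.Perm (Fin n)) (v : Fin n → ℝ)
    (h : ∀ i j, p i < p j → v i < v j) (i j : Fin n) : p i < p j ↔ v i < v j := by
  constructor
  · exact h i j
  · intro hv
    rcases lt_trichotomy (p i) (p j) with h' | h' | h'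
    · exact h'
    · have : i = j := p.injective (Fin.ext (by exact_mod_cast congrArg Fin.val h'))
      subst this; exact absurd hv (lt_irrefl _)
    · exact absurd (h j i h') (not_lt.mpr hv.le)

/-- Part 1: the pattern is allowed for the full tent map. -/
lemma allows_one (n : ℕ) (hn6 : 6 ≤ n) (hn : 2 ≤ n) :
    Allows (tentMap 1) (shiftPerm n hn) := by
  set ε : ℝ := ((2:ℝ)^(n+1))⁻¹ with hε
  have hεpos : 0 < ε := by positivity
  have hεsmall : ε ≤ ((2:ℝ)^7)⁻¹ := by
    apply inv_anti₀ (by positivity)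
    exact pow_le_pow_right₀ (by norm_num) (by omega)
  have hεs : ε ≤ 1/128 := by norm_num at hεsmall; linarith
  set x0 : ℝ := 1/2 - ε with hx0
  have hx0mem : x0 ∈ Icc (0:ℝ) 1 := by constructor <;> simp [hx0] <;> linarith
  refine ⟨x0, hx0mem, ?_⟩
  -- values of the orbit
  have hV1 : (tentMap 1)^[1] x0 = 1 - 2*ε := by
    simp only [Function.iterate_one]
    rw [tent_le (by simp [hx0]; linarith)]; ring
  have hVm : ∀ m, 2 ≤ m → m ≤ n - 1 → (tentMap 1)^[m] x0 = 2^m * ε := by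
    intro m h2 h3
    have := orbit1 n hn6 (m-2) (by omega)
    rwa [show m-2+2 = m by omega] at this
  have hquarter : ∀ m : ℕ, m ≤ n - 1 → (2:ℝ)^m * ε ≤ 1/4 := by
    intro m hm
    have h2 : (2:ℝ)^m ≤ 2^(n-1) := pow_le_pow_right₀ (by norm_num) hm
    have hkey : (2:ℝ)^(n-1) * ε = ((2:ℝ)^2)⁻¹ := by
      rw [hε]
      have : (2:ℝ)^(n+1) = 2^(n-1) * 2^2 := by
        rw [← pow_add]; congr 1; omega
      rw [this]; field_simp
    nlinarith [pow_pos (show (0:ℝ) < 2 by norm_num) (n-1),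
      pow_pos (show (0:ℝ) < 2 by norm_num) m]
  apply iff_of_strict
  intro i j hij
  rw [Fin.lt_def, shiftPerm_val, shiftPerm_val] at hij
  set a := (i : ℕ) with hA
  set b := (j : ℕ) with hB
  have hA1 : a < n := i.isLt
  have hB1 : b < n := j.isLt
  by_cases ha : a < 2 <;> by_cases hb : b < 2
  · -- a = 0, b = 1
    rw [if_pos ha, if_pos hb] at hij
    have ha0 : a = 0 := by omega
    have hb1 : b = 1 := by omega
    rw [ha0, hb1, hV1]
    simp only [Function.iterate_zero, id]
    simp only [hx0]; linarith
  · exfalso; rw [if_pos ha, if_neg hb] at hij; omega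
  · -- a ≥ 2, b ∈ {0,1}
    rw [if_neg ha, if_pos hb] at hij
    have hva : (tentMap 1)^[a] x0 = 2^a * ε := hVm a (by omega) (by omega)
    have hle : (2:ℝ)^a * ε ≤ 1/4 := hquarter a (by omega)
    interval_cases b
    · simp only [Function.iterate_zero, id]
      rw [hva]; simp only [hx0]; linarith
    · rw [hva, hV1]; linarith
  · -- a ≥ 2, b ≥ 2
    rw [if_neg ha, if_neg hb] at hij
    have hab : a < b := by omega
    rw [hVm a (by omega) (by omega), hVm b (by omega) (by omega)]
    have : (2:ℝ)^a < 2^b := pow_lt_pow_right₀ (by norm_num) hab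
    nlinarith

/-- Part 2: the pattern is not allowed for `T_μ` when `(2μ)^{n-4} · 2μ(1-μ) > 1`. -/
lemma not_allows (μ : ℝ) (hμ1 : 1/2 < μ) (hμ2 : μ < 1) (n : ℕ) (hn6 : 6 ≤ n) (hn : 2 ≤ n)
    (hbig : 1 < (2*μ)^(n-4) * (2*μ*(1-μ))) : ¬ Allows (tentMap μ) (shiftPerm n hn) := by
  rintro ⟨x, hx, h⟩
  set w : ℕ → ℝ := fun m => (tentMap μ)^[m] x with hw
  have step : ∀ m, w (m+1) = tentMap μ (w m) := fun m => Function.iterate_succ_apply' _ _ _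
  have hmem : ∀ m, w m ∈ Icc (0:ℝ) 1 := fun m => tent_iter_mem (by linarith) (by linarith) hx m
  have hord : ∀ a b : ℕ, a < n → b < n →
      ((if a < 2 then a+n-2 else a-2) < (if b < 2 then b+n-2 else b-2)) → w a < w b := by
    intro a b ha hb hr
    have key := (h ⟨a, ha⟩ ⟨b, hb⟩).mp
    apply key
    rw [Fin.lt_def, shiftPerm_val, shiftPerm_val]
    exact hr
  have mono : ∀ m, 2 ≤ m → m + 1 ≤ n - 1 → w m < w (m+1) := by
    intro m h2 h3
    exact hord m (m+1) (by omega) (by omega) (by split_ifs <;> omega)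
  have h01 : w 0 < w 1 := hord 0 1 (by omega) (by omega) (by split_ifs <;> omega)
  have h20 : w 2 < w 0 := hord 2 0 (by omega) (by omega) (by split_ifs <;> omega)
  have hw1μ : w 1 ≤ μ := by
    have : w 1 = tentMap μ (w 0) := step 0
    rw [this]
    exact (tent_mem (by linarith) (hmem 0)).2
  by_cases hc : w 1 ≤ 1/2
  · -- impossible: orbit would keep doubling
    have hw0 : w 0 ≤ 1/2 := by linarith
    have e2 : w 2 = 2*μ*(w 1) := by rw [step 1, tent_le hc]
    have hw1pos : 0 < w 1 := lt_of_le_of_lt (hmem 0).1 h01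
    nlinarith
  · -- w 1 > 1/2
    push_neg at hc
    have e2 : w 2 = 2*μ*(1 - w 1) := by rw [step 1, tent_gt (not_le.mpr hc)]
    have hw2lb : 2*μ*(1-μ) ≤ w 2 := by nlinarith
    have half : ∀ m, 2 ≤ m → m + 2 ≤ n - 1 → w m ≤ 1/2 := by
      intro m h2 h3
      by_contra hgt
      push_neg at hgt
      have s1 : w (m+1) = 2*μ*(1 - w m) := by rw [step m, tent_gt (not_le.mpr hgt)]
      have s2 : w m < w (m+1) := mono m h2 (by omega)
      have s3 : w (m+2) = 2*μ*(1 - w (m+1)) := by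
        rw [show m+2 = (m+1)+1 by ring, step (m+1), tent_gt (by push_neg; linarith)]
      have s5 : w (m+1) < w (m+2) := mono (m+1) (by omega) (by omega)
      nlinarith
    have formula : ∀ k, k ≤ n - 4 → w (k+2) = (2*μ)^k * w 2 := by
      intro k
      induction k with
      | zero => intro _; simp
      | succ k ih =>
        intro hk
        have hk' := ih (by omega)
        have hhalf := half (k+2) (by omega) (by omega)
        rw [show k+1+2 = (k+2)+1 by ring, step (k+2), tent_le hhalf, hk', pow_succ]
        ring
    have final : w (n-2) = (2*μ)^(n-4) * w 2 := by
      have := formula (n-4) le_rfl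
      rwa [show n-4+2 = n-2 by omega] at this
    have hlt : 1 < w (n-2) := by
      calc (1:ℝ) < (2*μ)^(n-4) * (2*μ*(1-μ)) := hbig
        _ ≤ (2*μ)^(n-4) * w 2 := by
            apply mul_le_mul_of_nonneg_left hw2lb (by positivity)
        _ = w (n-2) := final.symm
    exact absurd hlt (not_lt.mpr (hmem (n-2)).2)

/-- For `1/2 < μ < 1`, the inclusion `Allow(T_μ) ⊆ Allow(T)` is strict: some pattern is
allowed for the full tent map `T = T_1` but not for `T_μ`. -/
theorem allow_tentMap_ssubset (μ : ℝ) (hμ1 : 1/2 < μ) (hμ2 : μ < 1) :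
    ∃ (n : ℕ) (p : Equiv.Perm (Fin n)),
      Allows (tentMap 1) p ∧ ¬ Allows (tentMap μ) p := by
  have h2μ : (1:ℝ) < 2*μ := by linarith
  obtain ⟨k, hk⟩ := pow_unbounded_of_one_lt ((2*μ*(1-μ))⁻¹) h2μ
  have hpos : (0:ℝ) < 2*μ*(1-μ) := by nlinarith
  refine ⟨k + 6, shiftPerm (k+6) (by omega), allows_one (k+6) (by omega) (by omega), ?_⟩
  apply not_allows μ hμ1 hμ2 (k+6) (by omega) (by omega)
  have h1 : (2*μ)^k * (2*μ*(1-μ)) > 1 := by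
    have := (inv_lt_iff_one_lt_mul₀ hpos).mp hk
    nlinarith [pow_pos (show (0:ℝ) < 2*μ by linarith) k]
  have h2 : (2*μ)^k ≤ (2*μ)^(k+6-4) := pow_le_pow_right₀ (by linarith) (by omega)
  nlinarith [pow_pos (show (0:ℝ) < 2*μ by linarith) (k+6-4)]
end
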